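/- Let m ≥ 2, α a nonzero linear form in S = K[x_1,…,x_ℓ], and θ ∈ D^(m)(S). Then θ preserves the ideal αS if and only if the commutator [θ, x_i] preserves αS for every i with 1 ≤ i ≤ ℓ. -/

import Mathlib

open MvPolynomial

/-- The operator `∂^a = ∂_1^{a_1} ⋯ ∂_ℓ^{a_ℓ}` on `S = K[x_1,…,x_ℓ]`. -/
noncomputable def pdOp (K : Type) [CommRing K] {ℓ : ℕ} (a : Fin ℓ →₀ ℕ) :
    Module.End K (MvPolynomial (Fin ℓ) K) :=
  (List.ofFn fun i : Fin ℓ =>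
    ((pderiv i : Derivation K (MvPolynomial (Fin ℓ) K) (MvPolynomial (Fin ℓ) K)).toLinearMap) ^ (a i)).prod

/-- Multiplication by a polynomial, as a `K`-endomorphism of `S`. -/
noncomputable def mulOp (K : Type) [CommRing K] {ℓ : ℕ} (p : MvPolynomial (Fin ℓ) K) :
    Module.End K (MvPolynomial (Fin ℓ) K) :=
  LinearMap.mulLeft K p

/-- total degree `|a|` of a multi-index. -/
def mdeg {ℓ : ℕ} (a : Fin ℓ →₀ ℕ) : ℕ := a.sum fun _ n => n

/-- `a! = a_1! ⋯ a_ℓ!`. -/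
def mfact {ℓ : ℕ} (a : Fin ℓ →₀ ℕ) : ℕ := a.prod fun _ n => n.factorial

/-- The operator `Σ_a c_a ∂^a` from a finitely supported coefficient family. -/
noncomputable def sumOp (K : Type) [CommRing K] {ℓ : ℕ}
    (c : (Fin ℓ →₀ ℕ) →₀ MvPolynomial (Fin ℓ) K) :
    Module.End K (MvPolynomial (Fin ℓ) K) :=
  c.sum fun a p => p • pdOp K a

/-- `D^{(m)}(S) = ⊕_{|a|=m} S ∂^a`, as an `S`-submodule of `End_K(S)`. -/
noncomputable def Dfull (K : Type) [CommRing K] {ℓ : ℕ} (m : ℕ) :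
    Submodule (MvPolynomial (Fin ℓ) K) (Module.End K (MvPolynomial (Fin ℓ) K)) :=
  Submodule.span _ {θ | ∃ a : Fin ℓ →₀ ℕ, mdeg a = m ∧ θ = pdOp K a}

/-- Operators preserving the principal ideal `Q·S`. -/
noncomputable def stabMod (K : Type) [CommRing K] {ℓ : ℕ} (Q : MvPolynomial (Fin ℓ) K) :
    Submodule (MvPolynomial (Fin ℓ) K) (Module.End K (MvPolynomial (Fin ℓ) K)) where
  carrier := {θ | ∀ f, θ (Q * f) ∈ Ideal.span {Q}}
  add_mem' := by
    intro θ η hθ hη f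
    simpa using add_mem (hθ f) (hη f)
  zero_mem' := by intro f; simp
  smul_mem' := by
    intro p θ hθ f
    simpa [LinearMap.smul_apply, smul_eq_mul] using Ideal.mul_mem_left _ p (hθ f)

/-- `D^{(m)}` of (the ideal generated by) `Q`:
operators of order `m` preserving `Q·S`. For an arrangement with defining polynomial `Q`
this is `D^{(m)}(𝒜)`. -/
noncomputable def Dmod (K : Type) [CommRing K] {ℓ : ℕ} (m : ℕ) (Q : MvPolynomial (Fin ℓ) K) :
    Submodule (MvPolynomial (Fin ℓ) K) (Module.End K (MvPolynomial (Fin ℓ) K)) :=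
  Dfull K m ⊓ stabMod K Q

/-- `θ` is a homogeneous operator of order `m` and degree `d`. -/
def IsHomOp (K : Type) [CommRing K] {ℓ : ℕ} (m d : ℕ)
    (θ : Module.End K (MvPolynomial (Fin ℓ) K)) : Prop :=
  ∃ c : (Fin ℓ →₀ ℕ) →₀ MvPolynomial (Fin ℓ) K,
    (∀ a ∈ c.support, mdeg a = m) ∧ (∀ a, (c a).IsHomogeneous d) ∧ θ = sumOp K c

/-- A central hyperplane arrangement in `K^ℓ`, given by its (pairwise coprime,
nonzero, homogeneous of degree one) defining linear forms. -/
structure Arrangement (K : Type) [Field K] (ℓ : ℕ) where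
  forms : Finset (MvPolynomial (Fin ℓ) K)
  hom : ∀ α ∈ forms, α.IsHomogeneous 1
  ne_zero : ∀ α ∈ forms, α ≠ 0
  coprime : ∀ α ∈ forms, ∀ β ∈ forms, α ≠ β → IsCoprime α β

/-- The defining polynomial `Q = ∏_{H ∈ 𝒜} α_H`. -/
noncomputable def Arrangement.defQ {K : Type} [Field K] {ℓ : ℕ} (A : Arrangement K ℓ) :
    MvPolynomial (Fin ℓ) K :=
  ∏ α ∈ A.forms, α

/-- The coefficient matrix `M_m(θ_1,…,θ_s)` with entry `θ_j(x^{a(i)})/a(i)!`,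
for a chosen ordering `e` of the degree-`m` multi-indices. -/
noncomputable def coeffMat (K : Type) [Field K] {ℓ s : ℕ}
    (θ : Fin s → Module.End K (MvPolynomial (Fin ℓ) K))
    (e : Fin s → (Fin ℓ →₀ ℕ)) : Matrix (Fin s) (Fin s) (MvPolynomial (Fin ℓ) K) :=
  fun i j => C ((mfact (e i) : K)⁻¹) * (θ j (monomial (e i) 1))




section AuxLemmas
variable (K : Type) [CommRing K] {ℓ : ℕ}

lemma pderiv_isHom {p : MvPolynomial (Fin ℓ) K} {n : ℕ} (i : Fin ℓ)
    (hp : p.IsHomogeneous n) : (pderiv i p).IsHomogeneous (n - 1) := by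
  rw [p.as_sum, map_sum]
  apply IsHomogeneous.sum
  intro v hv
  rw [pderiv_monomial]
  by_cases hvi : v i = 0
  · simp [hvi, isHomogeneous_zero]
  · apply isHomogeneous_monomial
    have hdeg : v.degree = n := by
      rw [Finsupp.degree_eq_weight_one]
      exact hp (mem_support_iff.mp hv)
    have h1 : (v - Finsupp.single i 1) + Finsupp.single i 1 = v := by
      ext j
      simp only [Finsupp.coe_add, Finsupp.coe_tsub, Pi.add_apply, Pi.sub_apply,
        Finsupp.single_apply]
      by_cases h : i = j
      · subst h; simp; omega
      · simp [h]
    have h2 : (v - Finsupp.single i 1).degree + (Finsupp.single i 1).degree = v.degree := by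
      rw [← h1]
      simp [Finsupp.degree_eq_weight_one, map_add]
    have h3 : (Finsupp.single i 1).degree = 1 := by
      exact Finsupp.degree_single i 1
    omega

lemma pderiv_of_isHom_zero {p : MvPolynomial (Fin ℓ) K} (i : Fin ℓ)
    (hp : p.IsHomogeneous 0) : pderiv i p = 0 := by
  rw [p.as_sum, map_sum]
  apply Finset.sum_eq_zero
  intro v hv
  have hdeg : v.degree = 0 := by
    rw [Finsupp.degree_eq_weight_one]
    exact hp (mem_support_iff.mp hv)
  have hv0 : v = 0 := (Finsupp.degree_eq_zero_iff v).mp hdeg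
  subst hv0
  simp

lemma listDeriv (l : List (Fin ℓ)) (d : ℕ) (p : MvPolynomial (Fin ℓ) K)
    (hp : p.IsHomogeneous d) :
    ((l.map fun j =>
        ((pderiv j : Derivation K (MvPolynomial (Fin ℓ) K)
          (MvPolynomial (Fin ℓ) K)).toLinearMap)).prod p).IsHomogeneous (d - l.length) ∧
      (d < l.length → (l.map fun j =>
        ((pderiv j : Derivation K (MvPolynomial (Fin ℓ) K)
          (MvPolynomial (Fin ℓ) K)).toLinearMap)).prod p = 0) := by
  induction l with
  | nil => exact ⟨by simpa using hp, fun h => absurd h (by simp)⟩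
  | cons j l ih =>
    obtain ⟨ihh, ihz⟩ := ih
    set q := ((l.map fun j =>
        ((pderiv j : Derivation K (MvPolynomial (Fin ℓ) K)
          (MvPolynomial (Fin ℓ) K)).toLinearMap)).prod p) with hq
    have hcons : ((j :: l).map fun j =>
        ((pderiv j : Derivation K (MvPolynomial (Fin ℓ) K)
          (MvPolynomial (Fin ℓ) K)).toLinearMap)).prod p = pderiv j q := by
      simp [List.map_cons, List.prod_cons, Module.End.mul_apply, hq]
    rw [hcons]
    constructor
    · have := pderiv_isHom K j ihh
      simpa [Nat.sub_sub, List.length_cons] using this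
    · intro hd
      rcases Nat.lt_or_ge d l.length with h | h
      · rw [ihz h]; simp
      · have hdl : d = l.length := by simp at hd; omega
        have : q.IsHomogeneous 0 := by
          rw [hdl] at ihh; simpa using ihh
        exact pderiv_of_isHom_zero K j this

lemma pdOp_eq_list (a : Fin ℓ →₀ ℕ) :
    pdOp K a = (((List.ofFn fun i : Fin ℓ => List.replicate (a i) i).flatten).map fun j =>
      ((pderiv j : Derivation K (MvPolynomial (Fin ℓ) K)
        (MvPolynomial (Fin ℓ) K)).toLinearMap)).prod := by
  simp only [pdOp, List.map_flatten, List.prod_flatten, List.map_ofFn]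
  refine congrArg List.prod (congrArg List.ofFn (funext fun i => ?_))
  simp [Function.comp, List.map_replicate, List.prod_replicate]

lemma js_length (a : Fin ℓ →₀ ℕ) :
    ((List.ofFn fun i : Fin ℓ => List.replicate (a i) i).flatten).length = mdeg a := by
  simp only [List.length_flatten, List.map_ofFn, Function.comp, List.length_replicate,
    List.sum_ofFn]
  rw [mdeg, Finsupp.sum_fintype]
  simp

lemma pdOp_kill (a : Fin ℓ →₀ ℕ) (h : 2 ≤ mdeg a)
    {p : MvPolynomial (Fin ℓ) K} (hp : p.IsHomogeneous 1) : pdOp K a p = 0 := by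
  rw [pdOp_eq_list]
  refine (listDeriv K _ 1 p hp).2 ?_
  rw [js_length]
  omega

lemma apply_lin_zero (m : ℕ) (hm : 2 ≤ m) {α : MvPolynomial (Fin ℓ) K}
    (hα : α.IsHomogeneous 1) {θ : Module.End K (MvPolynomial (Fin ℓ) K)}
    (hθ : θ ∈ Dfull K (ℓ := ℓ) m) : θ α = 0 := by
  induction hθ using Submodule.span_induction with
  | mem θ' hθ' =>
    obtain ⟨a, ha, rfl⟩ := hθ'
    exact pdOp_kill K a (by omega) hα
  | zero => simp
  | add x y _ _ hx hy => simp [LinearMap.add_apply, hx, hy]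
  | smul p x _ hx => simp [LinearMap.smul_apply, hx]

end AuxLemmas

theorem mem_stab_iff_commutators (K : Type) [Field K] [CharZero K] {ℓ : ℕ}
    (m : ℕ) (hm : 2 ≤ m) (α : MvPolynomial (Fin ℓ) K)
    (hα : α.IsHomogeneous 1) (hα0 : α ≠ 0)
    (θ : Module.End K (MvPolynomial (Fin ℓ) K)) (hθ : θ ∈ Dfull K (ℓ := ℓ) m) :
    θ ∈ stabMod K α ↔
      ∀ i : Fin ℓ, θ * mulOp K (X i) - mulOp K (X i) * θ ∈ stabMod K α := by
  have hθα : θ α = 0 := apply_lin_zero K m hm hα hθ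
  constructor
  · intro hstab i f
    show (θ * mulOp K (X i) - mulOp K (X i) * θ) (α * f) ∈ Ideal.span {α}
    have h1 : (θ * mulOp K (X i) - mulOp K (X i) * θ) (α * f)
        = θ (α * (X i * f)) - X i * θ (α * f) := by
      simp only [LinearMap.sub_apply, Module.End.mul_apply, mulOp, LinearMap.mulLeft_apply]
      rw [show X i * (α * f) = α * (X i * f) by ring]
    rw [h1]
    exact sub_mem (hstab _) (Ideal.mul_mem_left _ _ (hstab f))
  · intro hcomm f
    induction f using MvPolynomial.induction_on with
    | C c =>
      have hc : α * C c = c • α := by rw [smul_eq_C_mul]; ring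
      rw [hc, map_smul, hθα, smul_zero]
      exact zero_mem _
    | add f g hf hg =>
      rw [mul_add, map_add]
      exact add_mem hf hg
    | mul_X f i hf =>
      have key := hcomm i f
      have h1 : θ (α * (f * X i)) = (θ * mulOp K (X i) - mulOp K (X i) * θ) (α * f)
          + X i * θ (α * f) := by
        simp only [LinearMap.sub_apply, Module.End.mul_apply, mulOp, LinearMap.mulLeft_apply]
        rw [show X i * (α * f) = α * (f * X i) by ring]
        ring
      show θ (α * (f * X i)) ∈ Ideal.span {α}
      rw [h1]
      exact add_mem key (Ideal.mul_mem_left _ _ hf)
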